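/- Let (q, p, H) solve the Painlevé III′ Hamiltonian system with parameters v1, v2 ∈ ℂ on an open set U ⊆ ℂ with 0 ∉ U. Define σ on Ũ := {s ∈ ℂ : s/4 ∈ U} by σ(s) := −(s/4)·H(s/4) − v1·(v1 − v2)/4 + s/4. Then σ satisfies the Jimbo–Miwa–Okamoto σ-form of Painlevé III′: (s·σ'')² − v1·v2·(σ')² + σ'·(4σ' − 1)·(σ − s·σ') − (v1 − v2)²/64 = 0 for all s ∈ Ũ. -/

import Mathlib

open Complex

/-- `(q, p, H)` solves the Painlevé III′ Hamiltonian system with parameters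
`v1, v2` on an open set `U ⊆ ℂ` with `0 ∉ U`. -/
def SolvesPIII' (v1 v2 : ℂ) (U : Set ℂ) (q p H : ℂ → ℂ) : Prop :=
  IsOpen U ∧ (0 : ℂ) ∉ U ∧
    DifferentiableOn ℂ q U ∧ DifferentiableOn ℂ p U ∧
    (∀ s ∈ U, s * H s =
      q s ^ 2 * p s ^ 2 - (q s ^ 2 + v1 * q s - s) * p s
        + (1 / 2) * (v1 + v2) * q s) ∧
    (∀ s ∈ U, s * deriv q s = 2 * q s ^ 2 * p s - q s ^ 2 - v1 * q s + s) ∧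
    (∀ s ∈ U, s * deriv p s =
      -2 * q s * p s ^ 2 + 2 * q s * p s + v1 * p s - (1 / 2) * (v1 + v2))

set_option maxHeartbeats 1000000 in
/-- The σ-function `σ(s) = −(s/4)H(s/4) − v1(v1−v2)/4 + s/4` of a Painlevé III′
Hamiltonian system satisfies the Jimbo–Miwa–Okamoto σ-form of Painlevé III′. -/
theorem painleveIIIprime_sigma_form (v1 v2 : ℂ) (U : Set ℂ)
    (q p H σ : ℂ → ℂ)
    (hsol : SolvesPIII' v1 v2 U q p H)
    (hσ : σ = fun s => -((s / 4) * H (s / 4)) - v1 * (v1 - v2) / 4 + s / 4) :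
    ∀ s : ℂ, s / 4 ∈ U →
      (s * deriv (deriv σ) s) ^ 2 - v1 * v2 * (deriv σ s) ^ 2
        + deriv σ s * (4 * deriv σ s - 1) * (σ s - s * deriv σ s)
        - (v1 - v2) ^ 2 / 64 = 0 := by
  obtain ⟨hU, h0, hq, hp, hH, hq', hp'⟩ := hsol
  -- Ũ is open
  have hUt : IsOpen {s : ℂ | s / 4 ∈ U} :=
    hU.preimage (by fun_prop : Continuous fun s : ℂ => s / 4)
  -- derivative of x ↦ q (x/4), p (x/4)
  have hQ : ∀ s : ℂ, s / 4 ∈ U →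
      HasDerivAt (fun x => q (x / 4)) (deriv q (s / 4) / 4) s := by
    intro s hs
    have hd : DifferentiableAt ℂ q (s / 4) := (hq.differentiableAt (hU.mem_nhds hs))
    have := hd.hasDerivAt.comp s ((hasDerivAt_id s).div_const 4)
    simpa [div_eq_mul_inv, mul_comm, Function.comp_def] using this
  have hP : ∀ s : ℂ, s / 4 ∈ U →
      HasDerivAt (fun x => p (x / 4)) (deriv p (s / 4) / 4) s := by
    intro s hs
    have hd : DifferentiableAt ℂ p (s / 4) := (hp.differentiableAt (hU.mem_nhds hs))
    have := hd.hasDerivAt.comp s ((hasDerivAt_id s).div_const 4)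
    simpa [div_eq_mul_inv, mul_comm, Function.comp_def] using this
  -- σ agrees with an explicit function on Ũ
  have hσeq : ∀ s : ℂ, s / 4 ∈ U → σ s =
      -(q (s/4) ^ 2 * p (s/4) ^ 2 - (q (s/4) ^ 2 + v1 * q (s/4) - s/4) * p (s/4)
        + (1/2) * (v1 + v2) * q (s/4)) - v1 * (v1 - v2) / 4 + s / 4 := by
    intro s hs
    rw [hσ]
    simp only
    rw [hH (s/4) hs]
  -- first derivative of σ
  have hσ1 : ∀ s : ℂ, s / 4 ∈ U → deriv σ s = (1 - p (s/4)) / 4 := by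
    intro s hs
    have t0 : (s / 4 : ℂ) ≠ 0 := fun h => h0 (h ▸ hs)
    have hev : σ =ᶠ[nhds s] fun x =>
        -(q (x/4) ^ 2 * p (x/4) ^ 2 - (q (x/4) ^ 2 + v1 * q (x/4) - x/4) * p (x/4)
          + (1/2) * (v1 + v2) * q (x/4)) - v1 * (v1 - v2) / 4 + x / 4 := by
      filter_upwards [hUt.mem_nhds hs] with x hx using hσeq x hx
    rw [hev.deriv_eq]
    have hQs := hQ s hs; have hPs := hP s hs
    have hid : HasDerivAt (fun x : ℂ => x / 4) (1/4) s := by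
      simpa using (hasDerivAt_id s).div_const 4
    have h1 := (hQs.pow 2).mul (hPs.pow 2)
    have h2 := (((hQs.pow 2).add (hQs.const_mul v1)).sub hid).mul hPs
    have h3 := ((h1.sub h2).add (hQs.const_mul ((1/2) * (v1 + v2)))).neg
    have hA := (h3.sub_const (v1 * (v1 - v2) / 4)).add hid
    erw [hA.deriv]
    have e1 : deriv q (s/4) = (2 * q (s/4) ^ 2 * p (s/4) - q (s/4) ^ 2 - v1 * q (s/4) + s/4) / (s/4) := by
      rw [eq_div_iff t0, mul_comm]; exact hq' (s/4) hs
    have e2 : deriv p (s/4) = (-2 * q (s/4) * p (s/4) ^ 2 + 2 * q (s/4) * p (s/4) + v1 * p (s/4) - (1/2) * (v1 + v2)) / (s/4) := by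
      rw [eq_div_iff t0, mul_comm]; exact hp' (s/4) hs
    rw [e1, e2]
    norm_num
    field_simp
    ring
  -- second derivative of σ
  have hσ2 : ∀ s : ℂ, s / 4 ∈ U → deriv (deriv σ) s = -(deriv p (s/4)) / 16 := by
    intro s hs
    have hev : deriv σ =ᶠ[nhds s] fun x => (1 - p (x/4)) / 4 := by
      filter_upwards [hUt.mem_nhds hs] with x hx using hσ1 x hx
    rw [hev.deriv_eq]
    have : HasDerivAt (fun x => (1 - p (x/4)) / 4) ((0 - deriv p (s/4) / 4) / 4) s :=
      ((hasDerivAt_const s (1:ℂ)).sub (hP s hs)).div_const 4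
    rw [this.deriv]; ring
  -- conclude
  intro s hs
  have t0 : (s / 4 : ℂ) ≠ 0 := fun h => h0 (h ▸ hs)
  have s0 : (s : ℂ) ≠ 0 := fun h => t0 (by simp [h])
  rw [hσ1 s hs, hσ2 s hs, hσeq s hs]
  have e2 := hp' (s/4) hs
  linear_combination (((s/4) * deriv p (s/4) +
    (-2 * q (s/4) * p (s/4) ^ 2 + 2 * q (s/4) * p (s/4) + v1 * p (s/4) - (1/2) * (v1 + v2))) / 16) * e2
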